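/- Andreief's identity: for continuous functions f_1,...,f_n and g_1,...,g_n on a measurable set E ⊂ ℝ with finite measure μ, one has det[∫_E f_j(z) g_k(z) dμ(z)]_{j,k=1}^n = (1/n!) ∫_{E^n} det[f_j(z_k)]_{j,k=1}^n · det[g_j(z_k)]_{j,k=1}^n dμ(z_1)...dμ(z_n). -/

import Mathlib

open MeasureTheory Set

section aux

variable {α : Type*} [MeasurableSpace α]

/-- Product of integrable functions on coordinates is integrable w.r.t. a pi measure. -/
theorem my_integrable_pi_prod (μ : Measure α) [SigmaFinite μ] :
    ∀ {n : ℕ} (f : Fin n → α → ℝ), (∀ i, Integrable (f i) μ) →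
      Integrable (fun x : Fin n → α => ∏ i, f i (x i)) (Measure.pi fun _ => μ) := by
  intro n
  induction n with
  | zero =>
      intro f hf
      simp only [Finset.univ_eq_empty, Finset.prod_empty]
      refine integrable_const_iff.2 (Or.inr ?_)
      exact ⟨by simp [Measure.pi_univ]⟩
  | succ n ih =>
      intro f hf
      have h := (measurePreserving_piFinSuccAbove (fun _ : Fin (n + 1) => μ) 0).symm
      rw [← h.integrable_comp_emb (MeasurableEquiv.measurableEmbedding _)]
      have key : Integrable
          (fun p : α × (Fin n → α) => f 0 p.1 * ∏ i : Fin n, f i.succ (p.2 i))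
          (μ.prod (Measure.pi fun _ : Fin n => μ)) :=
        Integrable.mul_prod (hf 0) (ih (fun i => f i.succ) (fun i => hf i.succ))
      apply key.congr
      filter_upwards with p
      simp only [Function.comp_apply, MeasurableEquiv.piFinSuccAbove_symm_apply]
      rw [Fin.prod_univ_succ]
      simp [Fin.insertNthEquiv, Fin.insertNth_zero, Fin.zero_succAbove]

/-- Fubini for a product of functions of the coordinates. -/
theorem my_integral_pi_prod (μ : Measure α) [SigmaFinite μ] :
    ∀ {n : ℕ} (f : Fin n → α → ℝ),
      ∫ x : Fin n → α, ∏ i, f i (x i) ∂(Measure.pi fun _ => μ)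
        = ∏ i, ∫ x, f i x ∂μ := by
  intro n
  induction n with
  | zero =>
      intro f
      simp [integral_const, Measure.pi_univ, measureReal_def]
  | succ n ih =>
      intro f
      have h := (measurePreserving_piFinSuccAbove (fun _ : Fin (n + 1) => μ) 0).symm
      rw [← h.integral_comp']
      have : ∀ p : α × (Fin n → α),
          (∏ i, f i ((MeasurableEquiv.piFinSuccAbove (fun _ => α) 0).symm p i))
            = f 0 p.1 * ∏ i : Fin n, f i.succ (p.2 i) := by
        intro p
        rw [Fin.prod_univ_succ]
        simp only [MeasurableEquiv.piFinSuccAbove_symm_apply]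
        simp [Fin.insertNthEquiv, Fin.insertNth_zero, Fin.zero_succAbove]
      simp_rw [this]
      rw [integral_prod_mul (f 0) (fun y : Fin n → α => ∏ i : Fin n, f i.succ (y i)),
        ih (fun i => f i.succ), Fin.prod_univ_succ]

/-- Restriction commutes with pi measures. -/
theorem my_pi_restrict (n : ℕ) (μ : Measure α) [SigmaFinite μ] {E : Set α}
    (_hE : MeasurableSet E) :
    Measure.pi (fun _ : Fin n => μ.restrict E)
      = (Measure.pi fun _ : Fin n => μ).restrict (Set.pi univ fun _ => E) := by
  refine ((Measure.pi_eq (μ := fun _ : Fin n => μ.restrict E)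
    (μ' := (Measure.pi fun _ : Fin n => μ).restrict (Set.pi univ fun _ => E))
    fun s hs => ?_))
  rw [Measure.restrict_apply (MeasurableSet.univ_pi hs)]
  rw [← Set.pi_inter_distrib, Measure.pi_pi]
  simp_rw [Measure.restrict_apply (hs _)]

end aux

/-- Andreief's identity:
`det[∫_E f_j g_k dμ] = (1/n!) ∫_{E^n} det[f_j(z_k)] · det[g_j(z_k)] dμ⊗ⁿ`. -/
theorem andreief_identity
    (n : ℕ) (E : Set ℝ) (hE : MeasurableSet E)
    (μ : Measure ℝ) [IsFiniteMeasure μ]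
    (f G : Fin n → ℝ → ℝ)
    (hf : ∀ j, Continuous (f j)) (hG : ∀ j, Continuous (G j))
    (hint : ∀ j k, IntegrableOn (fun z => f j z * G k z) E μ) :
    Matrix.det (Matrix.of fun j k => ∫ z in E, f j z * G k z ∂μ) =
      (1 / (n.factorial : ℝ)) *
        ∫ z in Set.univ.pi (fun _ : Fin n => E),
          Matrix.det (Matrix.of fun j k => f j (z k)) *
            Matrix.det (Matrix.of fun j k => G j (z k)) ∂(Measure.pi fun _ => μ) := by
  set ν := μ.restrict E with hν
  -- rewrite the RHS integral over the pi measure of ν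
  have hpi : (Measure.pi fun _ : Fin n => μ).restrict (Set.pi univ fun _ => E)
      = Measure.pi (fun _ : Fin n => ν) := (my_pi_restrict n μ hE).symm
  rw [hpi]
  set A : Matrix (Fin n) (Fin n) ℝ := Matrix.of fun j k => ∫ z, f j z * G k z ∂ν with hA
  -- step 1: expand the determinants and integrate term by term
  have hintg : ∀ (σ τ : Equiv.Perm (Fin n)) (k : Fin n),
      Integrable (fun z => f (σ k) z * G (τ k) z) ν := fun σ τ k => hint (σ k) (τ k)
  have expand : ∀ z : Fin n → ℝ,
      Matrix.det (Matrix.of fun j k => f j (z k)) *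
        Matrix.det (Matrix.of fun j k => G j (z k))
      = ∑ σ : Equiv.Perm (Fin n), ∑ τ : Equiv.Perm (Fin n),
          ((Equiv.Perm.sign σ : ℤ) : ℝ) * ((Equiv.Perm.sign τ : ℤ) : ℝ) *
            ∏ k, (f (σ k) (z k) * G (τ k) (z k)) := by
    intro z
    rw [Matrix.det_apply', Matrix.det_apply', Finset.sum_mul_sum]
    refine Finset.sum_congr rfl fun σ _ => Finset.sum_congr rfl fun τ _ => ?_
    simp only [Matrix.of_apply, smul_eq_mul, Units.smul_def, zsmul_eq_mul]
    rw [Finset.prod_mul_distrib]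
    ring
  have hterm : ∀ σ τ : Equiv.Perm (Fin n),
      Integrable (fun z : Fin n → ℝ =>
        ((Equiv.Perm.sign σ : ℤ) : ℝ) * ((Equiv.Perm.sign τ : ℤ) : ℝ) *
          ∏ k, (f (σ k) (z k) * G (τ k) (z k))) (Measure.pi fun _ => ν) := by
    intro σ τ
    exact (my_integrable_pi_prod ν _ (hintg σ τ)).const_mul _
  have step1 :
      ∫ z : Fin n → ℝ, Matrix.det (Matrix.of fun j k => f j (z k)) *
          Matrix.det (Matrix.of fun j k => G j (z k)) ∂(Measure.pi fun _ => ν)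
        = ∑ σ : Equiv.Perm (Fin n), ∑ τ : Equiv.Perm (Fin n),
            ((Equiv.Perm.sign σ : ℤ) : ℝ) * ((Equiv.Perm.sign τ : ℤ) : ℝ) *
              ∏ k, A (σ k) (τ k) := by
    simp_rw [expand]
    rw [integral_finset_sum _ (fun σ _ => integrable_finset_sum _ (fun τ _ => hterm σ τ))]
    refine Finset.sum_congr rfl fun σ _ => ?_
    rw [integral_finset_sum _ (fun τ _ => hterm σ τ)]
    refine Finset.sum_congr rfl fun τ _ => ?_
    rw [integral_const_mul, my_integral_pi_prod ν (fun k z => f (σ k) z * G (τ k) z)]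
    rfl
  -- step 2: algebraic identity
  have step2 : ∑ σ : Equiv.Perm (Fin n), ∑ τ : Equiv.Perm (Fin n),
      ((Equiv.Perm.sign σ : ℤ) : ℝ) * ((Equiv.Perm.sign τ : ℤ) : ℝ) *
        ∏ k, A (σ k) (τ k) = (n.factorial : ℝ) * A.det := by
    have inner : ∀ σ : Equiv.Perm (Fin n),
        ∑ τ : Equiv.Perm (Fin n),
          ((Equiv.Perm.sign σ : ℤ) : ℝ) * ((Equiv.Perm.sign τ : ℤ) : ℝ) *
            ∏ k, A (σ k) (τ k) = A.det := by
      intro σ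
      rw [← Equiv.sum_comp (Equiv.mulRight σ) (fun τ => ((Equiv.Perm.sign σ : ℤ) : ℝ) *
        ((Equiv.Perm.sign τ : ℤ) : ℝ) * ∏ k, A (σ k) (τ k))]
      have : ∀ ρ : Equiv.Perm (Fin n),
          ((Equiv.Perm.sign σ : ℤ) : ℝ) * ((Equiv.Perm.sign (ρ * σ) : ℤ) : ℝ) *
            ∏ k, A (σ k) ((ρ * σ) k)
          = ((Equiv.Perm.sign ρ : ℤ) : ℝ) * ∏ k, A k (ρ k) := by
        intro ρ
        have hprod : ∏ k, A (σ k) ((ρ * σ) k) = ∏ k, A k (ρ k) := by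
          rw [← Equiv.prod_comp σ (fun k => A k (ρ k))]
          rfl
        rw [hprod, Equiv.Perm.sign_mul]
        push_cast
        have hs : ((Equiv.Perm.sign σ : ℤ) : ℝ) * ((Equiv.Perm.sign σ : ℤ) : ℝ) = 1 := by
          rcases Int.units_eq_one_or (Equiv.Perm.sign σ) with h | h <;> simp [h]
        calc ((Equiv.Perm.sign σ : ℤ) : ℝ) *
              (((Equiv.Perm.sign ρ : ℤ) : ℝ) * ((Equiv.Perm.sign σ : ℤ) : ℝ)) * ∏ k, A k (ρ k)
            = (((Equiv.Perm.sign σ : ℤ) : ℝ) * ((Equiv.Perm.sign σ : ℤ) : ℝ)) *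
              ((Equiv.Perm.sign ρ : ℤ) : ℝ) * ∏ k, A k (ρ k) := by ring
          _ = ((Equiv.Perm.sign ρ : ℤ) : ℝ) * ∏ k, A k (ρ k) := by rw [hs, one_mul]
      simp only [Equiv.coe_mulRight, this]
      rw [← Matrix.det_transpose A, Matrix.det_apply']
      exact Finset.sum_congr rfl fun ρ _ => rfl
    simp_rw [inner]
    rw [Finset.sum_const, Finset.card_univ, Fintype.card_perm, Fintype.card_fin, nsmul_eq_mul]
  rw [step1, step2]
  have hfac : (n.factorial : ℝ) ≠ 0 := Nat.cast_ne_zero.2 n.factorial_ne_zero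
  field_simp
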